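/- Let (X, ρ) be a Cartan–Hadamard manifold with sectional curvature K ≤ −1 (hence a CAT(−1) space). Let δ, L > 0 with cosh L > e^δ. Let γ be an isometry of X whose displacement l(γ) = inf_{y∈X} ρ(y, γy) satisfies l(γ) ≤ δ, and let x₀ ∈ X with ρ(x₀, γx₀) ≥ L. Then ρ(x₀, γ²x₀) ≤ 2ρ(x₀, γx₀) − (1 − e^δ/cosh L)². -/

import Mathlib

/-- A (geodesic) `CAT(-1)` metric space, encoded via the existence of division points on
geodesic segments together with the hyperbolic comparison inequality
(law-of-cosines form of the `CAT(-1)` condition). A Cartan–Hadamard manifold with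
sectional curvature `K ≤ -1` satisfies this. -/
def IsCATMinusOne (X : Type*) [MetricSpace X] : Prop :=
  (∀ x y : X, ∀ t : ℝ, 0 ≤ t → t ≤ 1 →
    ∃ m : X, dist x m = t * dist x y ∧ dist m y = (1 - t) * dist x y) ∧
  (∀ x y z m : X, dist y m + dist m z = dist y z →
    Real.cosh (dist x m) * Real.sinh (dist y z) ≤
      Real.cosh (dist x y) * Real.sinh (dist m z) +
        Real.cosh (dist x z) * Real.sinh (dist y m))

private lemma cosh_mono_aux {a b : ℝ} (ha : 0 ≤ a) (h : a ≤ b) :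
    Real.cosh a ≤ Real.cosh b := by
  rw [Real.cosh_le_cosh, abs_of_nonneg ha, abs_of_nonneg (ha.trans h)]
  exact h

private lemma cosh_add_le_exp_mul (x s : ℝ) (hs : 0 ≤ s) :
    Real.cosh (x + s) ≤ Real.exp s * Real.cosh x := by
  have h1 : Real.cosh (x + s) = Real.cosh x * Real.cosh s + Real.sinh x * Real.sinh s :=
    Real.cosh_add x s
  have h2 : Real.cosh s + Real.sinh s = Real.exp s := Real.cosh_add_sinh s
  have h3 : Real.cosh x - Real.sinh x = Real.exp (-x) := Real.cosh_sub_sinh x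
  have h4 : 0 ≤ Real.sinh s := Real.sinh_nonneg_iff.2 hs
  have h5 : 0 ≤ (Real.cosh x - Real.sinh x) * Real.sinh s :=
    mul_nonneg (by rw [h3]; exact (Real.exp_pos _).le) h4
  rw [← h2]
  linarith only [h5, h1]

set_option maxHeartbeats 2000000 in
/-- The key geometric lemma, for an explicit almost-minimally-displaced point `y`. -/
private lemma key_lemma {X : Type*} [MetricSpace X] (hX : IsCATMinusOne X)
    (γ : X ≃ᵢ X) (δ L : ℝ) (hδ : 0 ≤ δ) (hL : 0 < L)
    (hcosh : Real.exp δ < Real.cosh L)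
    (y : X) (hy : dist y (γ y) ≤ δ)
    (x₀ : X) (hx₀ : L ≤ dist x₀ (γ x₀)) :
    dist x₀ (γ (γ x₀)) ≤
      2 * dist x₀ (γ x₀) - (1 - Real.exp δ / Real.cosh L) ^ 2 := by
  set d : ℝ := dist x₀ (γ x₀) with hd
  set D : ℝ := dist x₀ (γ (γ x₀)) with hD
  set c : ℝ := 1 - Real.exp δ / Real.cosh L with hc
  have hchpos : (0:ℝ) < Real.cosh L := Real.cosh_pos L
  have hch1 : (1:ℝ) ≤ Real.cosh L := Real.one_le_cosh L
  have hexp1 : (1:ℝ) ≤ Real.exp δ := by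
    rw [show (1:ℝ) = Real.exp 0 from Real.exp_zero.symm]
    exact Real.exp_le_exp.2 hδ
  have hexppos : (0:ℝ) < Real.exp δ := Real.exp_pos δ
  have hc0 : 0 < c := by
    have : Real.exp δ / Real.cosh L < 1 := (div_lt_one hchpos).2 hcosh
    simp only [hc]; linarith only [this]
  have hc1 : c < 1 := by
    have : 0 < Real.exp δ / Real.cosh L := div_pos hexppos hchpos
    simp only [hc]; linarith only [this]
  have hdd : dist (γ x₀) (γ (γ x₀)) = d := γ.dist_eq x₀ (γ x₀)
  have hD2d : D ≤ 2 * d := by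
    have := dist_triangle x₀ (γ x₀) (γ (γ x₀))
    rw [hdd] at this; simp only [hD, hd] at this ⊢; linarith only [this]
  have hLd : L ≤ d := hx₀
  -- c ≤ L
  have hcL : c ≤ L := by
    have h1 : c * Real.cosh L ≤ Real.cosh L - 1 := by
      have : c * Real.cosh L = Real.cosh L - Real.exp δ := by
        rw [hc]; field_simp
      linarith only [this, hexp1]
    have h2 : Real.cosh L - 1 ≤ L * Real.cosh L := by
      rcases le_or_gt 1 L with h | h
      · have h2' : 1 * Real.cosh L ≤ L * Real.cosh L :=
          mul_le_mul_of_nonneg_right h hchpos.le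
        rw [one_mul] at h2'
        linarith only [h2']
      · have hch_le : Real.cosh L ≤ Real.exp L := by
          rw [Real.cosh_eq]
          have : Real.exp (-L) ≤ Real.exp L := Real.exp_le_exp.2 (by linarith only [hL])
          linarith only [this]
        have h1L : 1 - L ≤ Real.exp (-L) := by linarith only [Real.add_one_le_exp (-L)]
        have : Real.exp L * (1 - L) ≤ 1 := by
          have := mul_le_mul_of_nonneg_left h1L (Real.exp_pos L).le
          rw [← Real.exp_add] at this
          simpa using this
        have h3' : Real.cosh L * (1 - L) ≤ Real.exp L * (1 - L) :=
          mul_le_mul_of_nonneg_right hch_le (by linarith only [h])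
        nlinarith only [h3', this]
    have h4 : c * Real.cosh L ≤ L * Real.cosh L := le_trans h1 h2
    exact le_of_mul_le_mul_right h4 hchpos
  have hc2d : c ^ 2 ≤ d := by
    have h1 : c * c ≤ c * 1 := mul_le_mul_of_nonneg_left hc1.le hc0.le
    have h2 : c ^ 2 ≤ c := by rw [pow_two]; linarith only [h1]
    linarith only [h2, hcL, hLd]
  by_contra hcon
  push_neg at hcon
  -- hcon : 2 * d - c ^ 2 < D
  set E : ℝ := 2 * d - D with hE
  have hE0 : 0 ≤ E := by simp only [hE]; linarith only [hD2d]
  have hEc : E < c ^ 2 := by simp only [hE]; linarith only [hcon]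
  have hdpos : 0 < d := lt_of_lt_of_le hL hLd
  have hDpos : 0 < D := by linarith only [hcon, hc2d, hdpos]
  -- midpoint of [x₀, γ²x₀]
  obtain ⟨m, hm1, hm2⟩ := hX.1 x₀ (γ (γ x₀)) (1/2) (by norm_num) (by norm_num)
  have hm1' : dist x₀ m = D / 2 := by rw [hm1]; simp only [← hD]; ring
  have hm2' : dist m (γ (γ x₀)) = D / 2 := by rw [hm2]; simp only [← hD]; ring
  have hadd : dist x₀ m + dist m (γ (γ x₀)) = dist x₀ (γ (γ x₀)) := by
    rw [hm1', hm2', ← hD]; ring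
  have hsinhD : Real.sinh D = 2 * Real.sinh (D/2) * Real.cosh (D/2) := by
    have : D = 2 * (D/2) := by ring
    rw [this, Real.sinh_two_mul]; ring
  have hsinhpos : 0 < Real.sinh (D/2) := Real.sinh_pos_iff.2 (by linarith only [hDpos])
  set t : ℝ := dist (γ x₀) m with ht
  have ht0 : 0 ≤ t := dist_nonneg
  -- comparison (i): cosh t * cosh (D/2) ≤ cosh d
  have comp1 := hX.2 (γ x₀) x₀ (γ (γ x₀)) m hadd
  have hi : Real.cosh t * Real.cosh (D/2) ≤ Real.cosh d := by
    rw [hm1', hm2', dist_comm (γ x₀) x₀, hdd, ← hd, ← hD, ← ht, hsinhD] at comp1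
    have h1 : (Real.cosh t * Real.cosh (D/2)) * Real.sinh (D/2) ≤
        Real.cosh d * Real.sinh (D/2) := by linarith only [comp1]
    exact le_of_mul_le_mul_right h1 hsinhpos
  -- comparison (ii): cosh (D/2) ≤ exp (t + δ)
  set r : ℝ := dist y x₀ with hr
  set r' : ℝ := dist y (γ x₀) with hr'
  set w : ℝ := dist y m with hw
  set s : ℝ := dist y (γ (γ x₀)) with hs
  have hw0 : 0 ≤ w := dist_nonneg
  have hr'0 : 0 ≤ r' := dist_nonneg
  have hrb : r ≤ r' + δ := by
    have h1 : dist y x₀ = dist (γ y) (γ x₀) := (γ.dist_eq y x₀).symm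
    have h2 : dist (γ y) (γ x₀) ≤ dist (γ y) y + dist y (γ x₀) := dist_triangle _ _ _
    rw [dist_comm (γ y) y] at h2
    simp only [hr, hr']; linarith only [h1, h2, hy]
  have hsb : s ≤ r' + δ := by
    have h1 : dist y (γ (γ x₀)) ≤ dist y (γ y) + dist (γ y) (γ (γ x₀)) := dist_triangle _ _ _
    have h2 : dist (γ y) (γ (γ x₀)) = dist y (γ x₀) := γ.dist_eq y (γ x₀)
    simp only [hs, hr']; linarith only [h1, h2, hy]
  have hr'b : r' ≤ w + t := by
    have h1 : dist y (γ x₀) ≤ dist y m + dist m (γ x₀) := dist_triangle _ _ _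
    rw [dist_comm m (γ x₀)] at h1
    simp only [hr', hw, ht]; linarith only [h1]
  have comp2 := hX.2 y x₀ (γ (γ x₀)) m hadd
  have hii : Real.cosh (D/2) ≤ Real.exp (t + δ) := by
    rw [hm1', hm2', ← hD, ← hr, ← hs, ← hw, hsinhD] at comp2
    have h1 : 2 * Real.cosh w * Real.cosh (D/2) ≤ Real.cosh r + Real.cosh s := by
      have h0 : (2 * Real.cosh w * Real.cosh (D/2)) * Real.sinh (D/2) ≤
          (Real.cosh r + Real.cosh s) * Real.sinh (D/2) := by linarith only [comp2]
      exact le_of_mul_le_mul_right h0 hsinhpos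
    have h2 : Real.cosh r ≤ Real.cosh (r' + δ) := cosh_mono_aux dist_nonneg hrb
    have h3 : Real.cosh s ≤ Real.cosh (r' + δ) := cosh_mono_aux dist_nonneg hsb
    have h4 : Real.cosh (r' + δ) ≤ Real.cosh (w + (t + δ)) :=
      cosh_mono_aux (by linarith only [hr'0, hδ]) (by linarith only [hr'b])
    have h5 : Real.cosh (w + (t + δ)) ≤ Real.exp (t + δ) * Real.cosh w :=
      cosh_add_le_exp_mul w (t + δ) (by linarith only [ht0, hδ])
    have hwpos : 0 < Real.cosh w := Real.cosh_pos w
    have h6 : Real.cosh (D/2) * (2 * Real.cosh w) ≤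
        Real.exp (t + δ) * (2 * Real.cosh w) := by linarith only [h1, h2, h3, h4, h5]
    exact le_of_mul_le_mul_right h6 (by positivity)
  -- cosh d ≤ exp (E/2) * cosh (D/2)
  have hdDE : d = D/2 + E/2 := by simp only [hE]; ring
  have hcoshd : Real.cosh d ≤ Real.exp (E/2) * Real.cosh (D/2) := by
    rw [hdDE]; exact cosh_add_le_exp_mul (D/2) (E/2) (div_nonneg hE0 (by norm_num))
  have hD2pos : 0 < Real.cosh (D/2) := Real.cosh_pos _
  -- cosh t ≤ exp (E/2)
  have hcosht : Real.cosh t ≤ Real.exp (E/2) := by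
    have h1 : Real.cosh t * Real.cosh (D/2) ≤ Real.exp (E/2) * Real.cosh (D/2) :=
      hi.trans hcoshd
    exact le_of_mul_le_mul_right h1 hD2pos
  -- cosh L ≤ exp(E/2) * exp (t + δ)
  have hclb : Real.cosh L ≤ Real.exp (E/2) * Real.exp (t + δ) := by
    have h1 : Real.cosh L ≤ Real.cosh d := cosh_mono_aux hL.le hLd
    have h2 : Real.exp (E/2) * Real.cosh (D/2) ≤ Real.exp (E/2) * Real.exp (t + δ) :=
      mul_le_mul_of_nonneg_left hii (Real.exp_pos _).le
    linarith only [hcoshd, h1, h2]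
  -- sinh t ≤ sqrt E * exp (E/2)
  have hexpEE : Real.exp (E/2) * Real.exp (E/2) = Real.exp E := by
    rw [← Real.exp_add]; norm_num
  have hsinht_sq : Real.sinh t ^ 2 ≤ E * Real.exp E := by
    have h1 : Real.cosh t ^ 2 = Real.sinh t ^ 2 + 1 := Real.cosh_sq t
    have h2 : Real.cosh t ^ 2 ≤ Real.exp E := by
      have := mul_le_mul hcosht hcosht (Real.cosh_pos t).le (Real.exp_pos _).le
      rw [hexpEE] at this
      rw [pow_two]
      linarith only [this]
    have h3 : Real.exp E - 1 ≤ E * Real.exp E := by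
      have h4 : 1 - E ≤ Real.exp (-E) := by linarith only [Real.add_one_le_exp (-E)]
      have h5 := mul_le_mul_of_nonneg_left h4 (Real.exp_pos E).le
      rw [← Real.exp_add] at h5
      simp only [add_neg_cancel, Real.exp_zero] at h5
      linarith only [h5]
    linarith only [h1, h2, h3]
  have hsinht : Real.sinh t ≤ Real.sqrt E * Real.exp (E/2) := by
    have hB0 : 0 ≤ Real.sqrt E * Real.exp (E/2) :=
      mul_nonneg (Real.sqrt_nonneg E) (Real.exp_pos _).le
    have hBsq : (Real.sqrt E * Real.exp (E/2)) ^ 2 = E * Real.exp E := by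
      rw [mul_pow, Real.sq_sqrt hE0, pow_two, hexpEE]
    have hst0 : 0 ≤ Real.sinh t := Real.sinh_nonneg_iff.2 ht0
    have hle : Real.sinh t ^ 2 ≤ (Real.sqrt E * Real.exp (E/2)) ^ 2 := by
      rw [hBsq]; exact hsinht_sq
    have h2 := Real.sqrt_le_sqrt hle
    rwa [Real.sqrt_sq hst0, Real.sqrt_sq hB0] at h2
  -- exp t ≤ exp(E/2) * (1 + sqrt E)
  have hexpt : Real.exp t ≤ Real.exp (E/2) * (1 + Real.sqrt E) := by
    have h1 : Real.cosh t + Real.sinh t = Real.exp t := Real.cosh_add_sinh t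
    linarith only [hcosht, hsinht, h1]
  -- final contradiction
  have hsqrtE : Real.sqrt E < c := by
    have h1 : Real.sqrt E < Real.sqrt (c ^ 2) := Real.sqrt_lt_sqrt hE0 hEc
    rwa [Real.sqrt_sq hc0.le] at h1
  have hexpE : Real.exp E < Real.exp (c ^ 2) := Real.exp_lt_exp.2 hEc
  have hec2 : Real.exp (c ^ 2) * (1 - c ^ 2) < 1 := by
    have h1 : 1 - c ^ 2 < Real.exp (-(c ^ 2)) := by
      have hc2pos : 0 < c ^ 2 := pow_pos hc0 2
      have := Real.add_one_lt_exp (x := -(c^2)) (neg_ne_zero.mpr (ne_of_gt hc2pos))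
      linarith only [this]
    have h2 := mul_lt_mul_of_pos_left h1 (Real.exp_pos (c^2))
    rw [← Real.exp_add] at h2
    simp only [add_neg_cancel, Real.exp_zero] at h2
    linarith only [h2]
  -- combine: cosh L ≤ exp δ * exp E * (1 + sqrt E) < exp δ * exp (c²) * (1 + c)
  have hmain : Real.cosh L ≤ Real.exp δ * (Real.exp E * (1 + Real.sqrt E)) := by
    have h1 : Real.exp (E/2) * Real.exp (t + δ) =
        Real.exp δ * (Real.exp (E/2) * Real.exp t) := by
      rw [Real.exp_add]; ring
    have h2 : Real.exp (E/2) * Real.exp t ≤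
        Real.exp (E/2) * (Real.exp (E/2) * (1 + Real.sqrt E)) :=
      mul_le_mul_of_nonneg_left hexpt (Real.exp_pos _).le
    calc Real.cosh L ≤ Real.exp (E/2) * Real.exp (t + δ) := hclb
      _ = Real.exp δ * (Real.exp (E/2) * Real.exp t) := h1
      _ ≤ Real.exp δ * (Real.exp (E/2) * (Real.exp (E/2) * (1 + Real.sqrt E))) :=
          mul_le_mul_of_nonneg_left h2 (Real.exp_pos _).le
      _ = Real.exp δ * (Real.exp E * (1 + Real.sqrt E)) := by
          rw [← hexpEE]; ring
  have hstrict : Real.exp E * (1 + Real.sqrt E) < Real.exp (c ^ 2) * (1 + c) := by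
    have h1 : 0 < 1 + Real.sqrt E := by positivity
    have h2 : (1:ℝ) + Real.sqrt E < 1 + c := by linarith only [hsqrtE]
    exact mul_lt_mul'' hexpE h2 (Real.exp_pos E).le (by positivity)
  have hfin : Real.cosh L < Real.exp δ / (1 - c) := by
    have h1mc : 0 < 1 - c := by linarith only [hc1]
    have h3 : Real.exp (c ^ 2) * (1 + c) < 1 / (1 - c) := by
      rw [lt_div_iff₀ h1mc]
      nlinarith only [hec2]
    have h4 : Real.cosh L < Real.exp δ * (1 / (1 - c)) := by
      calc Real.cosh L ≤ Real.exp δ * (Real.exp E * (1 + Real.sqrt E)) := hmain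
        _ < Real.exp δ * (Real.exp (c^2) * (1 + c)) := by
            exact mul_lt_mul_of_pos_left hstrict hexppos
        _ < Real.exp δ * (1 / (1 - c)) := mul_lt_mul_of_pos_left h3 hexppos
    rw [div_eq_mul_one_div]; exact h4
  have hcontra : Real.exp δ / (1 - c) = Real.cosh L := by
    have : 1 - c = Real.exp δ / Real.cosh L := by simp only [hc]; ring
    rw [this]
    rw [div_div_eq_mul_div, mul_comm, mul_div_assoc, div_self (ne_of_gt hexppos), mul_one]
  rw [hcontra] at hfin
  exact lt_irrefl _ hfin

theorem stmt_4 {X : Type*} [MetricSpace X] (hX : IsCATMinusOne X)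
    (γ : X ≃ᵢ X) (δ L : ℝ) (hδ : 0 < δ) (hL : 0 < L)
    (hcosh : Real.exp δ < Real.cosh L)
    (hdisp : (⨅ y : X, dist y (γ y)) ≤ δ)
    (x₀ : X) (hx₀ : L ≤ dist x₀ (γ x₀)) :
    dist x₀ (γ (γ x₀)) ≤
      2 * dist x₀ (γ x₀) - (1 - Real.exp δ / Real.cosh L) ^ 2 := by
  have hne : Nonempty X := ⟨x₀⟩
  have hchpos : (0:ℝ) < Real.cosh L := Real.cosh_pos L
  have hch1 : (1:ℝ) ≤ Real.cosh L := Real.one_le_cosh L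
  refine le_of_forall_pos_le_add (fun ε hε => ?_)
  -- pick δ' slightly above δ
  set v : ℝ := min (Real.cosh L) (Real.exp δ + ε / 2) with hv
  have hvgt : Real.exp δ < v := lt_min hcosh (by linarith only [hε])
  have hvpos : 0 < v := lt_trans (Real.exp_pos δ) hvgt
  set δ' : ℝ := Real.log ((Real.exp δ + v) / 2) with hδ'
  have hmidpos : 0 < (Real.exp δ + v) / 2 := by positivity
  have hexpδ' : Real.exp δ' = (Real.exp δ + v) / 2 := Real.exp_log hmidpos
  have hgt : Real.exp δ < Real.exp δ' := by rw [hexpδ']; linarith only [hvgt]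
  have hlt : Real.exp δ' < v := by rw [hexpδ']; linarith only [hvgt]
  have hδlt : δ < δ' := by
    have := Real.exp_lt_exp.1 hgt; exact this
  have hδ'pos : 0 < δ' := lt_trans hδ hδlt
  have hcosh' : Real.exp δ' < Real.cosh L := lt_of_lt_of_le hlt (min_le_left _ _)
  -- get y with dist y (γ y) ≤ δ'
  have hinf : (⨅ y : X, dist y (γ y)) < δ' := lt_of_le_of_lt hdisp hδlt
  obtain ⟨y, hy⟩ := exists_lt_of_ciInf_lt hinf
  have hkey := key_lemma hX γ δ' L hδ'pos.le hL hcosh' y hy.le x₀ hx₀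
  -- compare the constants
  have hcc : (1 - Real.exp δ / Real.cosh L) ^ 2 - (1 - Real.exp δ' / Real.cosh L) ^ 2 ≤ ε := by
    set a : ℝ := Real.exp δ / Real.cosh L with ha
    set b : ℝ := Real.exp δ' / Real.cosh L with hb
    have ha0 : 0 < a := div_pos (Real.exp_pos δ) hchpos
    have hb0 : 0 < b := div_pos (Real.exp_pos δ') hchpos
    have ha1 : a < 1 := (div_lt_one hchpos).2 hcosh
    have hb1 : b < 1 := (div_lt_one hchpos).2 hcosh'
    have hab : a ≤ b := by
      rw [ha, hb, div_le_div_iff₀ hchpos hchpos]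
      exact mul_le_mul_of_nonneg_right hgt.le hchpos.le
    have hd1 : Real.exp δ' ≤ Real.exp δ + ε / 2 := le_trans hlt.le (min_le_right _ _)
    have hba : b - a ≤ ε / 2 := by
      have h2 : b - a = (Real.exp δ' - Real.exp δ) / Real.cosh L := by
        rw [ha, hb]; ring
      have h3 : (Real.exp δ' - Real.exp δ) / Real.cosh L ≤ Real.exp δ' - Real.exp δ :=
        div_le_self (by linarith only [hgt]) hch1
      linarith only [h2, h3, hd1]
    have key := mul_le_mul hba (show 2 - a - b ≤ 2 by linarith only [ha0, hb0])
      (by linarith only [ha1, hb1]) (by linarith only [hε])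
    nlinarith only [key]
  linarith only [hkey, hcc]
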